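/- arXiv:1502.07981 — 2 statements merged into one kernel-verified Lean document; each statement's English description precedes it below -/
import Mathlib

section
/- Every nonempty word over {a, b, c} represents a nontrivial permutation of X^ℕ: if s₁, s₂, …, s_n ∈ {a, b, c} with n ≥ 1, then the composition s₁s₂⋯s_n is not the identity permutation of X^ℕ. -/
/-!
We formalize the automaton `A` of the paper: alphabet `X = {1,2,3}` is encoded as
`Fin 3` (letter `i+1` ↦ `i`), states `a, b, c` are encoded as `0, 1, 2 : Fin 3`.
Each state induces a permutation of the space `ℕ → Fin 3` of infinite sequences.

Note on conventions: in the paper, products of tree automorphisms compose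
left-to-right (in a word `s₁s₂⋯sₙ`, the letter `s₁` acts first); in Mathlib,
`(f * g) w = f (g w)`, i.e. the right factor acts first.  Hence a paper word
`uv` is rendered as the Lean product `v * u`; e.g. the paper's `α = ab⁻¹`
(apply `a`, then `b⁻¹`) is `b⁻¹ * a` below.
-/

namespace Lamplighter

section Generic

variable {S X : Type*}

/-- The state of the automaton after reading the first `n` letters of `w`, starting at `s`. -/
def run (nxt : S → X → S) (s : S) (w : ℕ → X) : ℕ → S
  | 0 => s
  | n + 1 => nxt (run nxt s w n) (w n)

/-- The output sequence of the automaton started in state `s` reading `w`. -/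
def fwd (nxt : S → X → S) (out : S → Equiv.Perm X) (s : S) (w : ℕ → X) : ℕ → X :=
  fun n => out (run nxt s w n) (w n)

/-- Transition function of the inverse automaton. -/
def invNxt (nxt : S → X → S) (out : S → Equiv.Perm X) (s : S) (y : X) : S :=
  nxt s ((out s).symm y)

/-- The action of the inverse automaton, started at state `s`. -/
def bwd (nxt : S → X → S) (out : S → Equiv.Perm X) (s : S) (y : ℕ → X) : ℕ → X :=
  fun n => (out (run (invNxt nxt out) s y n)).symm (y n)

theorem run_inv_fwd (nxt : S → X → S) (out : S → Equiv.Perm X) (s : S) (w : ℕ → X) :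
    ∀ n, run (invNxt nxt out) s (fwd nxt out s w) n = run nxt s w n := by
  intro n
  induction n with
  | zero => rfl
  | succ n ih => simp [run, ih, invNxt, fwd]

theorem run_bwd (nxt : S → X → S) (out : S → Equiv.Perm X) (s : S) (y : ℕ → X) :
    ∀ n, run nxt s (bwd nxt out s y) n = run (invNxt nxt out) s y n := by
  intro n
  induction n with
  | zero => rfl
  | succ n ih => simp [run, ih, bwd, invNxt]

/-- The permutation of the space of infinite sequences induced by state `s`
of an invertible automaton. -/
def statePerm (nxt : S → X → S) (out : S → Equiv.Perm X) (s : S) : Equiv.Perm (ℕ → X) where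
  toFun := fwd nxt out s
  invFun := bwd nxt out s
  left_inv := fun w => funext fun n => by simp [bwd, run_inv_fwd, fwd]
  right_inv := fun y => funext fun n => by simp [fwd, run_bwd, bwd]

end Generic

/-- The alphabet `X = {1,2,3}`, encoded as `Fin 3`. -/
abbrev X3 := Fin 3

/-- Transition function of the automaton `A` (states `a = 0`, `b = 1`, `c = 2`):
from `a`: `1 ↦ a, 2 ↦ b, 3 ↦ c`; from `b`: `1 ↦ c, 2 ↦ a, 3 ↦ b`;
from `c`: `1 ↦ b, 2 ↦ c, 3 ↦ a`. -/
def nxtA : Fin 3 → X3 → Fin 3 := ![![0, 1, 2], ![2, 0, 1], ![1, 2, 0]]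

/-- Output permutations of the automaton `A`: state `a` acts on letters as the
transposition `(2 3)`, state `b` as `(1 3)`, state `c` as `(1 2)`. -/
def outA : Fin 3 → Equiv.Perm X3 := ![Equiv.swap 1 2, Equiv.swap 0 2, Equiv.swap 0 1]

/-- The permutation of `X^ℕ` given by state `a`. -/
def a : Equiv.Perm (ℕ → X3) := statePerm nxtA outA 0

/-- The permutation of `X^ℕ` given by state `b`. -/
def b : Equiv.Perm (ℕ → X3) := statePerm nxtA outA 1

/-- The permutation of `X^ℕ` given by state `c`. -/
def c : Equiv.Perm (ℕ → X3) := statePerm nxtA outA 2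

/-- The group `G_A` generated by the automaton `A`. -/
def GA : Subgroup (Equiv.Perm (ℕ → X3)) := Subgroup.closure {a, b, c}

/-- The element `α = ab⁻¹` of the paper (first apply `a`, then `b⁻¹`). -/
def α : Equiv.Perm (ℕ → X3) := b⁻¹ * a

/-- The set `W` of permutations acting coordinatewise by a sequence of even
permutations of the alphabet. -/
def W : Set (Equiv.Perm (ℕ → X3)) :=
  {g | ∃ π : ℕ → Equiv.Perm X3, (∀ n, Equiv.Perm.sign (π n) = 1) ∧
    ∀ (w : ℕ → X3) (n : ℕ), g w n = π n (w n)}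

/-- The subgroup `N` generated by the conjugates `a⁻ⁿ α aⁿ`, `n ∈ ℤ`
(in Lean's composition order: `aⁿ * α * a⁻ⁿ`). -/
def N : Subgroup (Equiv.Perm (ℕ → X3)) :=
  Subgroup.closure {g | ∃ n : ℤ, g = a ^ n * α * a ^ (-n)}

open Fin.CommRing

/-!  Auxiliary development for Statement 12.

Identify `X3 = Fin 3` with `𝔽₃`.  One checks that state `s` outputs `-s - x`
on input `x` and moves to state `x - s`.  Hence every state permutation is an
affine map of `𝔽₃^ℕ` whose *linear part* is the same operator
`A = (L + 2) / (L + 1)` (where `L` is the shift), i.e. `(1 + L) ∘ A = L + 2`.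
A word of length `k` therefore has linear part `Aᵏ`, and if the word were
trivial we would get `(1+L)ᵏ δ₀ = (L+2)ᵏ δ₀`; summing the (finitely supported)
coordinates gives `2ᵏ = 0` in `𝔽₃`, a contradiction. -/

/-- The operator `1 + L` (`L` = shift). -/
def Pop (w : ℕ → X3) : ℕ → X3
  | 0 => w 0
  | n + 1 => w (n + 1) + w n

/-- The operator `L + 2 = L - 1` over `𝔽₃`. -/
def Qop (w : ℕ → X3) : ℕ → X3
  | 0 => -w 0
  | n + 1 => w n - w (n + 1)

@[simp] lemma pop_zero (w : ℕ → X3) : Pop w 0 = w 0 := rfl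
@[simp] lemma pop_succ (w : ℕ → X3) (n : ℕ) : Pop w (n + 1) = w (n + 1) + w n := rfl
@[simp] lemma qop_zero (w : ℕ → X3) : Qop w 0 = -w 0 := rfl
@[simp] lemma qop_succ (w : ℕ → X3) (n : ℕ) : Qop w (n + 1) = w n - w (n + 1) := rfl

lemma outA_eq (s x : Fin 3) : outA s x = -s - x := by revert s x; decide

lemma nxtA_eq (s x : Fin 3) : nxtA s x = x - s := by revert s x; decide

lemma run_diff (s : Fin 3) (u v : ℕ → X3) (n : ℕ) :
    run nxtA s u (n + 1) - run nxtA s v (n + 1)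
      = (u n - v n) - (run nxtA s u n - run nxtA s v n) := by
  show nxtA (run nxtA s u n) (u n) - nxtA (run nxtA s v n) (v n) = _
  rw [nxtA_eq, nxtA_eq]; ring

/-- The per-generator relation: `(1+L)(g u - g v) = (L+2)(u - v)`. -/
lemma fwd_diff (s : Fin 3) (u v : ℕ → X3) (n : ℕ) :
    Pop (fun m => fwd nxtA outA s u m - fwd nxtA outA s v m) n
      = Qop (fun m => u m - v m) n := by
  have hchar : ∀ x y d : Fin 3, (-(x - d) - y) + (-d - x) = x - y := by decide
  cases n with
  | zero =>
      show fwd nxtA outA s u 0 - fwd nxtA outA s v 0 = -(u 0 - v 0)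
      simp only [fwd, outA_eq]
      show -s - u 0 - (-s - v 0) = -(u 0 - v 0)
      ring
  | succ n =>
      show (fwd nxtA outA s u (n + 1) - fwd nxtA outA s v (n + 1))
          + (fwd nxtA outA s u n - fwd nxtA outA s v n)
        = (u n - v n) - (u (n + 1) - v (n + 1))
      simp only [fwd, outA_eq]
      have hd := run_diff s u v n
      calc (-run nxtA s u (n+1) - u (n+1)) - (-run nxtA s v (n+1) - v (n+1))
            + ((-run nxtA s u n - u n) - (-run nxtA s v n - v n))
          = (-(run nxtA s u (n+1) - run nxtA s v (n+1)) - (u (n+1) - v (n+1)))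
            + (-(run nxtA s u n - run nxtA s v n) - (u n - v n)) := by ring
        _ = (-((u n - v n) - (run nxtA s u n - run nxtA s v n)) - (u (n+1) - v (n+1)))
            + (-(run nxtA s u n - run nxtA s v n) - (u n - v n)) := by rw [hd]
        _ = (u n - v n) - (u (n + 1) - v (n + 1)) :=
              hchar (u n - v n) (u (n+1) - v (n+1))
                (run nxtA s u n - run nxtA s v n)

lemma pop_qop (w : ℕ → X3) : ∀ n, Pop (Qop w) n = Qop (Pop w) n
  | 0 => by
      show Qop w 0 = -(Pop w 0)
      rfl
  | 1 => by
      show Qop w 1 + Qop w 0 = Pop w 0 - Pop w 1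
      show (w 0 - w 1) + -w 0 = w 0 - (w 1 + w 0)
      ring
  | (n + 2) => by
      show Qop w (n + 2) + Qop w (n + 1) = Pop w (n + 1) - Pop w (n + 2)
      show (w (n + 1) - w (n + 2)) + (w n - w (n + 1))
        = (w (n + 1) + w n) - (w (n + 2) + w (n + 1))
      ring

lemma pop_qop_iter (k : ℕ) : ∀ w : ℕ → X3, Pop (Qop^[k] w) = Qop^[k] (Pop w) := by
  induction k with
  | zero => intro w; rfl
  | succ k ih =>
      intro w
      rw [Function.iterate_succ_apply, Function.iterate_succ_apply, ih,
        funext (pop_qop w)]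

/-- The generators coerce to `fwd`. -/
lemma gen_fwd (s : Fin 3) :
    ⇑((![a, b, c] : Fin 3 → Equiv.Perm (ℕ → X3)) s) = fwd nxtA outA s := by
  fin_cases s <;> rfl

/-- A word of length `k` has linear part determined by `(1+L)ᵏ ∘ Aᵏ = (L+2)ᵏ`. -/
lemma word_diff : ∀ (l : List (Fin 3)) (u v : ℕ → X3),
    Pop^[l.length]
      (fun n => ((l.map (![a, b, c] : Fin 3 → Equiv.Perm (ℕ → X3))).reverse).prod u n
        - ((l.map (![a, b, c] : Fin 3 → Equiv.Perm (ℕ → X3))).reverse).prod v n)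
    = Qop^[l.length] (fun n => u n - v n) := by
  intro l
  induction l with
  | nil => intro u v; rfl
  | cons s t ih =>
      intro u v
      have hprod : (((s :: t).map (![a, b, c] : Fin 3 → Equiv.Perm (ℕ → X3))).reverse).prod
          = ((t.map (![a, b, c] : Fin 3 → Equiv.Perm (ℕ → X3))).reverse).prod
            * (![a, b, c] : Fin 3 → Equiv.Perm (ℕ → X3)) s := by
        simp [List.reverse_cons]
      rw [hprod]
      show Pop^[t.length + 1] _ = Qop^[t.length + 1] _
      rw [Function.iterate_succ_apply']
      have happ : (fun n => (((t.map (![a, b, c] : Fin 3 → Equiv.Perm (ℕ → X3))).reverse).prod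
            * (![a, b, c] : Fin 3 → Equiv.Perm (ℕ → X3)) s) u n
          - (((t.map (![a, b, c] : Fin 3 → Equiv.Perm (ℕ → X3))).reverse).prod
            * (![a, b, c] : Fin 3 → Equiv.Perm (ℕ → X3)) s) v n)
          = (fun n => ((t.map (![a, b, c] : Fin 3 → Equiv.Perm (ℕ → X3))).reverse).prod
              ((![a, b, c] : Fin 3 → Equiv.Perm (ℕ → X3)) s u) n
            - ((t.map (![a, b, c] : Fin 3 → Equiv.Perm (ℕ → X3))).reverse).prod
              ((![a, b, c] : Fin 3 → Equiv.Perm (ℕ → X3)) s v) n) := by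
        funext n
        simp [Equiv.Perm.mul_apply]
      rw [happ, ih, pop_qop_iter]
      have hstep : Pop (fun n => (![a, b, c] : Fin 3 → Equiv.Perm (ℕ → X3)) s u n
          - (![a, b, c] : Fin 3 → Equiv.Perm (ℕ → X3)) s v n)
          = Qop (fun n => u n - v n) := by
        funext n
        rw [gen_fwd]
        exact fwd_diff s u v n
      rw [hstep, ← Function.iterate_succ_apply]

/-- The sequence `δ₀`. -/
def eSeq : ℕ → X3 := fun n => if n = 0 then 1 else 0

lemma sum_pop (w : ℕ → X3) (M : ℕ) :
    ∑ n ∈ Finset.range (M + 1), Pop w n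
      = (∑ n ∈ Finset.range (M + 1), w n) + ∑ n ∈ Finset.range M, w n := by
  induction M with
  | zero => simp
  | succ M ih =>
      rw [Finset.sum_range_succ, ih, pop_succ,
        Finset.sum_range_succ w (M + 1), Finset.sum_range_succ w M]
      ring

lemma sum_qop (w : ℕ → X3) (M : ℕ) :
    ∑ n ∈ Finset.range (M + 1), Qop w n = -w M := by
  induction M with
  | zero => simp
  | succ M ih =>
      rw [Finset.sum_range_succ, ih, qop_succ]
      ring

lemma supp_pop (w : ℕ → X3) (M : ℕ) (h : ∀ m, M < m → w m = 0) :
    ∀ m, M + 1 < m → Pop w m = 0 := by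
  intro m hm
  match m, hm with
  | (m + 1), hm =>
      rw [pop_succ, h (m + 1) (by omega), h m (by omega), add_zero]

lemma supp_qop (w : ℕ → X3) (M : ℕ) (h : ∀ m, M < m → w m = 0) :
    ∀ m, M + 1 < m → Qop w m = 0 := by
  intro m hm
  match m, hm with
  | (m + 1), hm =>
      rw [qop_succ, h (m + 1) (by omega), h m (by omega), sub_zero]

lemma supp_pop_iter : ∀ k m, k < m → Pop^[k] eSeq m = 0 := by
  intro k
  induction k with
  | zero => intro m hm; simp [eSeq]; omega
  | succ k ih =>
      intro m hm
      rw [Function.iterate_succ_apply']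
      exact supp_pop _ k ih m hm

lemma supp_qop_iter : ∀ k m, k < m → Qop^[k] eSeq m = 0 := by
  intro k
  induction k with
  | zero => intro m hm; simp [eSeq]; omega
  | succ k ih =>
      intro m hm
      rw [Function.iterate_succ_apply']
      exact supp_qop _ k ih m hm

lemma sum_pop_iter : ∀ k, ∑ n ∈ Finset.range (k + 1), Pop^[k] eSeq n = 2 ^ k := by
  intro k
  induction k with
  | zero => simp [eSeq]
  | succ k ih =>
      rw [Function.iterate_succ_apply', sum_pop, Finset.sum_range_succ,
        supp_pop_iter k (k + 1) (by omega), add_zero, ih, pow_succ]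
      ring

lemma sum_qop_iter (k : ℕ) :
    ∑ n ∈ Finset.range (k + 2), Qop^[k + 1] eSeq n = 0 := by
  rw [Function.iterate_succ_apply', sum_qop, supp_qop_iter k (k + 1) (by omega),
    neg_zero]

lemma two_pow_ne_zero (k : ℕ) : (2 : X3) ^ k ≠ 0 := by
  intro h
  have h2 : (2 : X3) ^ k * 2 ^ k = 1 := by
    rw [← mul_pow, (by decide : (2 * 2 : X3) = 1), one_pow]
  rw [h, zero_mul] at h2
  exact absurd h2 (by decide)

/-- Every nonempty word over `{a, b, c}` represents a nontrivial
permutation of `X^ℕ`.  (The composition `s₁s₂⋯sₙ` applies `s₁` first, hence the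
reversed Lean product; nontriviality is of course independent of the order.) -/
theorem nonempty_word_nontrivial :
    ∀ l : List (Fin 3), l ≠ [] →
      ((l.map (![a, b, c] : Fin 3 → Equiv.Perm (ℕ → X3))).reverse).prod ≠ 1 := by
  intro l hl h1
  obtain ⟨s, t, rfl⟩ : ∃ s t, l = s :: t := by
    cases l with
    | nil => exact absurd rfl hl
    | cons s t => exact ⟨s, t, rfl⟩
  have hw := word_diff (s :: t) eSeq (fun _ => 0)
  rw [h1] at hw
  have he : (fun n => (1 : Equiv.Perm (ℕ → X3)) eSeq n
      - (1 : Equiv.Perm (ℕ → X3)) (fun _ => 0) n) = eSeq := by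
    funext n
    simp
  rw [he] at hw
  have hesub : (fun n => eSeq n - (fun _ : ℕ => (0 : X3)) n) = eSeq := by
    funext n; simp
  rw [hesub] at hw
  have hlen : (s :: t).length = t.length + 1 := rfl
  rw [hlen] at hw
  have hsum := congrArg (fun w : ℕ → X3 => ∑ n ∈ Finset.range (t.length + 2), w n) hw
  rw [sum_pop_iter (t.length + 1), sum_qop_iter t.length] at hsum
  exact two_pow_ne_zero _ hsum

end Lamplighter
end

section
/- The element a has infinite order in G_A: aⁿ is not the identity permutation of X^ℕ for every integer n ≥ 1. -/
/-!
We formalize the automaton `A` of the paper: alphabet `X = {1,2,3}` is encoded as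
`Fin 3` (letter `i+1` ↦ `i`), states `a, b, c` are encoded as `0, 1, 2 : Fin 3`.
Each state induces a permutation of the space `ℕ → Fin 3` of infinite sequences.

Note on conventions: in the paper, products of tree automorphisms compose
left-to-right (in a word `s₁s₂⋯sₙ`, the letter `s₁` acts first); in Mathlib,
`(f * g) w = f (g w)`, i.e. the right factor acts first.  Hence a paper word
`uv` is rendered as the Lean product `v * u`; e.g. the paper's `α = ab⁻¹`
(apply `a`, then `b⁻¹`) is `b⁻¹ * a` below.
-/

namespace Lamplighter

/-! ### Auxiliary material for Statement 13

Each output permutation is of the form `x ↦ κ s - x` over `𝔽₃`, where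
`κ a = 0`, `κ b = 2`, `κ c = 1`, and the transition satisfies
`κ (nxt s x) = -(κ s + x)`.  It follows that, writing `φ w` for the power
series over `𝔽₃` with coefficients the digits of `w`, we have
`(1 + X) * φ (a w) = (X - 1) * φ w`.  Hence `aⁿ = 1` would give
`(1 + X)ⁿ = (X - 1)ⁿ`, which fails at `X = 1`. -/

/-- The "state constant": state `s` acts on digits as `x ↦ κ s - x` over `𝔽₃`. -/
def κ : Fin 3 → ZMod 3 := ![0, 2, 1]

/-- Digit sequence of `w` viewed in `𝔽₃`. -/
def dig (w : ℕ → X3) (n : ℕ) : ZMod 3 := ((w n).val : ZMod 3)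

lemma out_eq (s : Fin 3) (x : X3) : ((outA s x).val : ZMod 3) = κ s - (x.val : ZMod 3) := by
  revert s x; decide

lemma nxt_eq (s : Fin 3) (x : X3) : κ (nxtA s x) = -(κ s + (x.val : ZMod 3)) := by
  revert s x; decide

lemma a_apply (w : ℕ → X3) (n : ℕ) : a w n = outA (run nxtA 0 w n) (w n) := rfl

lemma run_succ' (w : ℕ → X3) (n : ℕ) :
    run nxtA 0 w (n + 1) = nxtA (run nxtA 0 w n) (w n) := rfl

lemma dig_a_zero (w : ℕ → X3) : dig (a w) 0 = -dig w 0 := by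
  have h0 : run nxtA 0 w 0 = 0 := rfl
  simp [dig, a_apply, out_eq, h0, κ]

lemma dig_a_succ (w : ℕ → X3) (n : ℕ) :
    dig (a w) (n + 1) + dig (a w) n = dig w n - dig w (n + 1) := by
  have h1 : dig (a w) n = κ (run nxtA 0 w n) - dig w n := by
    simp [dig, a_apply, out_eq]
  have h2 : dig (a w) (n + 1) = κ (run nxtA 0 w (n + 1)) - dig w (n + 1) := by
    simp [dig, a_apply, out_eq]
  rw [h1, h2, run_succ', nxt_eq]
  have hd : ((w n).val : ZMod 3) = dig w n := rfl
  have h3 : (3 : ZMod 3) = 0 := by decide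
  rw [hd]
  linear_combination (-(dig w n)) * h3

/-- The power series over `𝔽₃` with coefficients the digits of `w`. -/
noncomputable def φser (w : ℕ → X3) : PowerSeries (ZMod 3) :=
  PowerSeries.mk (dig w)

lemma key_step (w : ℕ → X3) :
    (1 + PowerSeries.X) * φser (a w) = (PowerSeries.X - 1) * φser w := by
  ext n
  have l1 : (1 + PowerSeries.X) * φser (a w) = φser (a w) + PowerSeries.X * φser (a w) := by
    ring
  have l2 : (PowerSeries.X - 1) * φser w = PowerSeries.X * φser w - φser w := by
    ring
  rw [l1, l2]
  cases n with
  | zero =>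
      simp only [map_add, map_sub, PowerSeries.coeff_zero_X_mul, φser, PowerSeries.coeff_mk]
      have := dig_a_zero w
      linear_combination this
  | succ n =>
      simp only [map_add, map_sub, PowerSeries.coeff_succ_X_mul, φser, PowerSeries.coeff_mk]
      have := dig_a_succ w n
      linear_combination this

lemma key_iter (n : ℕ) (w : ℕ → X3) :
    (1 + PowerSeries.X) ^ n * φser ((a ^ n) w) = (PowerSeries.X - 1) ^ n * φser w := by
  induction n generalizing w with
  | zero => simp
  | succ n ih =>
      have hpow : (a ^ (n + 1)) w = a ((a ^ n) w) := by
        rw [pow_succ']; rfl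
      rw [hpow, pow_succ, mul_assoc, key_step ((a ^ n) w), ← mul_assoc,
        mul_comm ((1 + PowerSeries.X) ^ n) (PowerSeries.X - 1), mul_assoc, ih,
        ← mul_assoc, ← pow_succ']

/-- The sequence `(1,0,0,…)`, whose digit power series is `1`. -/
def δ0 : ℕ → X3 := fun k => if k = 0 then 1 else 0

lemma φser_δ0 : φser δ0 = 1 := by
  ext n
  cases n with
  | zero => simp [φser, dig, δ0]
  | succ n => simp [φser, dig, δ0, PowerSeries.coeff_one]

/-- The element `a` has infinite order: `aⁿ ≠ 1` for all `n ≥ 1`. -/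
theorem a_infinite_order :
    ∀ n : ℕ, 1 ≤ n → a ^ n ≠ 1 := by
  intro n hn h
  have hfix : (a ^ n) δ0 = δ0 := by rw [h]; rfl
  have E : (1 + PowerSeries.X : PowerSeries (ZMod 3)) ^ n = (PowerSeries.X - 1) ^ n := by
    have := key_iter n δ0
    rw [hfix, φser_δ0, mul_one, mul_one] at this
    exact this
  have Epoly : (1 + Polynomial.X : Polynomial (ZMod 3)) ^ n = (Polynomial.X - 1) ^ n := by
    rw [← Polynomial.coe_inj]
    simp only [Polynomial.coe_pow, Polynomial.coe_add, Polynomial.coe_sub,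
      Polynomial.coe_one, Polynomial.coe_X]
    exact E
  have hev := congrArg (Polynomial.eval (1 : ZMod 3)) Epoly
  simp only [Polynomial.eval_pow, Polynomial.eval_add, Polynomial.eval_sub,
    Polynomial.eval_one, Polynomial.eval_X, sub_self,
    zero_pow (by omega : n ≠ 0)] at hev
  exact pow_ne_zero n (by decide : (1 : ZMod 3) + 1 ≠ 0) hev

end Lamplighter
end
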